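/- Fix d ≥ 1 and ψ_S ∈ ℂ^d of Euclidean norm 1. Let (M_j)_{j≥1} be a sequence in M_d(ℂ) with M_j ψ_S = ψ_S for all j, and for each j let ψ_j ∈ ℂ^d satisfy M_j^* ψ_j = ψ_j and ⟨ψ_j, ψ_S⟩ = 1. Set P_j := |ψ_S⟩⟨ψ_j|, Q_j := I − P_j, M_{Q_j} := Q_j M_j Q_j, Ψ_n := M_1 M_2 ⋯ M_n. Then for every n ≥ 1: Ψ_n = |ψ_S⟩⟨θ_n| + M_{Q_1} M_{Q_2} ⋯ M_{Q_n}, where θ_n = ψ_n + M_{Q_n}^* ψ_{n−1} + M_{Q_n}^* M_{Q_{n−1}}^* ψ_{n−2} + ⋯ + M_{Q_n}^* ⋯ M_{Q_2}^* ψ_1, and moreover θ_n = M_n^* ⋯ M_2^* ψ_1 and ⟨θ_n, ψ_S⟩ = 1. -/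

import Mathlib

open scoped BigOperators
open MeasureTheory Filter ContinuousLinearMap

noncomputable section

abbrev Evec (d : ℕ) := EuclideanSpace ℂ (Fin d)
abbrev Op (d : ℕ) := Evec d →L[ℂ] Evec d

/-- `ketBra u v = |u⟩⟨v|`, the rank-one operator `x ↦ ⟪v, x⟫ • u`. -/
def ketBra {d : ℕ} (u v : Evec d) : Op d := (innerSL ℂ v).smulRight u

@[simp] lemma ketBra_apply {d : ℕ} (u v x : Evec d) : ketBra u v x = (inner ℂ v x : ℂ) • u := rfl

lemma adjoint_ketBra {d : ℕ} (u v : Evec d) : adjoint (ketBra u v) = ketBra v u := by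
  symm
  rw [ContinuousLinearMap.eq_adjoint_iff]
  intro x y
  simp [inner_smul_left, inner_smul_right]
  ring

lemma adjoint_sub' {d : ℕ} (A B : Op d) : adjoint (A - B) = adjoint A - adjoint B :=
  map_sub (ContinuousLinearMap.adjoint : Op d ≃ₗᵢ⋆[ℂ] Op d) A B

/-- decomposition `Ψ_n = |ψ_S⟩⟨θ_n| + M_{Q_1} ⋯ M_{Q_n}` with
`θ_n = M_n^* ⋯ M_2^* ψ_1 = Σ_{k=0}^{n-1} M_{Q_n}^* ⋯ M_{Q_{n-k+1}}^* ψ_{n-k}` and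
`⟨θ_n, ψ_S⟩ = 1`.  The sequence `(M_j)_{j≥1}` of the paper is indexed here by `j : ℕ`
(so `M 0, M 1, …` stand for `M_1, M_2, …`). -/
theorem stmt3 {d : ℕ} (hd : 1 ≤ d) (ψS : Evec d) (hψS : ‖ψS‖ = 1)
    (M : ℕ → Op d) (hfix : ∀ j, M j ψS = ψS)
    (ψ : ℕ → Evec d)
    (hψfix : ∀ j, adjoint (M j) (ψ j) = ψ j)
    (hψnorm : ∀ j, (inner ℂ (ψ j) ψS : ℂ) = 1)
    (P Q MQ : ℕ → Op d)
    (hP : ∀ j, P j = ketBra ψS (ψ j))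
    (hQ : ∀ j, Q j = 1 - P j)
    (hMQ : ∀ j, MQ j = Q j * M j * Q j)
    (Ψ : ℕ → Op d)
    (hΨ : ∀ n, Ψ n = (List.ofFn fun i : Fin n => M i).prod)
    (θ : ℕ → Evec d)
    (hθ : ∀ n, θ n = ((List.ofFn fun i : Fin (n - 1) => adjoint (M (n - 1 - i))).prod) (ψ 0)) :
    ∀ n : ℕ, 1 ≤ n →
      Ψ n = ketBra ψS (θ n) + (List.ofFn fun i : Fin n => MQ i).prod ∧
      θ n = ∑ k : Fin n,
        ((List.ofFn fun i : Fin k => adjoint (MQ (n - 1 - i))).prod) (ψ (n - 1 - k)) ∧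
      (inner ℂ (θ n) ψS : ℂ) = 1 := by
  -- basic algebraic facts
  have hPM : ∀ j, P j * M j = P j := by
    intro j
    ext x
    simp [hP, mul_apply, ← adjoint_inner_left, hψfix]
  have hMP : ∀ j, M j * P j = P j := by
    intro j
    ext x
    simp [hP, mul_apply, hfix]
  have hPP : ∀ j, P j * P j = P j := by
    intro j
    ext x
    simp [hP, mul_apply, inner_smul_right, hψnorm, mul_smul]
  have hMQeq : ∀ j, MQ j = M j - P j := by
    intro j
    have h1 : Q j * M j = M j - P j := by rw [hQ, sub_mul, one_mul, hPM]
    rw [hMQ, h1, hQ, mul_sub, mul_one, sub_mul, hMP, hPP, sub_self, sub_zero]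
  have hMQψS : ∀ j, MQ j ψS = 0 := by
    intro j
    rw [hMQeq]
    simp [hP, hfix, hψnorm]
  -- product of MQ's kills ψS
  have hAψS : ∀ n : ℕ, 1 ≤ n → ((List.ofFn fun i : Fin n => MQ i).prod) ψS = 0 := by
    intro n hn
    obtain ⟨m, rfl⟩ : ∃ m, n = m + 1 := ⟨n - 1, by omega⟩
    rw [List.ofFn_succ']
    simp [List.prod_concat, mul_apply, hMQψS]
  -- θ recurrence
  have hθ1 : θ 1 = ψ 0 := by simp [hθ]
  have hθrec : ∀ n : ℕ, 1 ≤ n → θ (n + 1) = adjoint (M n) (θ n) := by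
    intro n hn
    obtain ⟨m, rfl⟩ : ∃ m, n = m + 1 := ⟨n - 1, by omega⟩
    rw [hθ, hθ]
    simp only [Nat.add_sub_cancel]
    rw [List.ofFn_succ]
    simp only [List.prod_cons, mul_apply_eq_comp, Fin.val_zero, Nat.sub_zero, Fin.val_succ,
      Fin.coe_cast]
    have hfe : (fun i : Fin m => adjoint (M (m + 1 - ((i : ℕ) + 1))))
        = fun i : Fin m => adjoint (M (m - (i : ℕ))) := by
      funext i; congr 2; omega
    rw [hfe]
  -- Ψ recurrence
  have hΨrec : ∀ n : ℕ, Ψ (n + 1) = Ψ n * M n := by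
    intro n
    rw [hΨ, hΨ, List.ofFn_succ']
    simp [List.prod_concat]
  -- inner products with ψS
  have hθinner : ∀ n : ℕ, 1 ≤ n → (inner ℂ (θ n) ψS : ℂ) = 1 := by
    intro n hn
    induction n with
    | zero => omega
    | succ m ih =>
      rcases Nat.lt_or_ge 1 (m + 1) with h | h
      · have hm : 1 ≤ m := by omega
        rw [hθrec m hm, adjoint_inner_left, hfix, ih hm]
      · have hm0 : m = 0 := by omega
        subst hm0
        rw [hθ1]; exact hψnorm 0
  -- main induction
  intro n hn
  induction n with
  | zero => omega
  | succ m ih =>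
    rcases Nat.lt_or_ge 1 (m + 1) with h | h
    · have hm : 1 ≤ m := by omega
      obtain ⟨ih1, ih2, ih3⟩ := ih hm
      have hθs : θ (m + 1) = ψ m + adjoint (MQ m) (θ m) := by
        rw [hθrec m hm, hMQeq m, adjoint_sub', sub_apply, hP m, adjoint_ketBra]
        have h1 : (inner ℂ ψS (θ m) : ℂ) = 1 := by
          rw [← inner_conj_symm, hθinner m hm]; simp
        simp only [ketBra_apply, h1, one_smul]
        abel
      refine ⟨?_, ?_, hθinner (m + 1) hn⟩
      · -- decomposition
        rw [hΨrec, ih1, add_mul]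
        have hAP : (List.ofFn fun i : Fin m => MQ i).prod * P m = 0 := by
          ext x
          simp [mul_apply, hP, inner_smul_right, _root_.map_smul, hAψS m hm]
        have hMsplit : M m = P m + MQ m := by rw [hMQeq m]; abel
        have h1 : ketBra ψS (θ m) * M m = ketBra ψS (θ (m + 1)) := by
          ext x
          simp only [mul_apply_eq_comp, ketBra_apply, hθrec m hm, adjoint_inner_left]
        rw [h1, hMsplit, mul_add, hAP, zero_add]
        rw [List.ofFn_succ']
        simp [List.prod_concat, mul_add]
      · -- sum formula
        rw [hθs, ih2]
        rw [Fin.sum_univ_succ]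
        simp only [Fin.val_zero, List.ofFn_zero, List.prod_nil, one_apply, Nat.add_sub_cancel,
          Nat.sub_zero]
        congr 1
        rw [map_sum]
        apply Finset.sum_congr rfl
        intro k _
        rw [List.ofFn_succ]
        simp only [List.prod_cons, mul_apply_eq_comp, Fin.val_succ, Fin.val_zero, Nat.sub_zero,
          Nat.add_sub_cancel]
        have hfe : (fun i : Fin (k : ℕ) => adjoint (MQ (m - ((i : ℕ) + 1))))
            = fun i : Fin (k : ℕ) => adjoint (MQ (m - 1 - (i : ℕ))) := by
          funext i; congr 2; omega
        have hψe : m - ((k : ℕ) + 1) = m - 1 - (k : ℕ) := by omega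
        rw [hfe, hψe]
    · -- base case n = 1
      have hm0 : m = 0 := by omega
      subst hm0
      refine ⟨?_, ?_, hθinner 1 le_rfl⟩
      · rw [hΨrec, hΨ]
        simp only [List.ofFn_zero, List.prod_nil, one_mul, List.ofFn_succ, List.prod_cons,
          mul_one, Fin.val_zero]
        rw [hθ1, hMQeq 0, hP 0]
        abel
      · rw [hθ1]
        simp
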